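/- The total number of runs in the PBWT satisfies r̃ ≤ w·(h'' + 1), where w is the haplotype length and h'' the number of adjacent distinct-haplotype pairs. -/

import Mathlib

namespace PBWT

/-- The reversed prefix of length `j` (truncated at `w`) of haplotype `i`:
used to express the co-lexicographic order of prefixes. -/
def revPrefix {h w : ℕ} (S : Fin h → Fin w → ℕ) (j : ℕ) (i : Fin h) : List ℕ :=
  ((List.range j).filterMap (fun t => if ht : t < w then some (S i ⟨t, ht⟩) else none)).reverse

/-- `PA` is the stable sort of the haplotype indices by the co-lexicographic
order of their prefixes of length `j` (ties broken by original index). -/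
def IsStableSort {h w : ℕ} (S : Fin h → Fin w → ℕ) (j : ℕ) (PA : Fin h ≃ Fin h) : Prop :=
  ∀ a b : Fin h, a < b →
    List.Lex (· < ·) (revPrefix S j (PA a)) (revPrefix S j (PA b)) ∨
      (revPrefix S j (PA a) = revPrefix S j (PA b) ∧ (PA a).val < (PA b).val)

/-- Number of maximal runs of equal adjacent values in the sequence `f`. -/
def runCount {α : Type*} [DecidableEq α] {n : ℕ} (f : Fin n → α) : ℕ :=
  ((List.ofFn f).destutter (· ≠ ·)).length

/-- `h''`: the number of indices `i` with `S i ≠ S (i+1)`. -/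
noncomputable def adjDiff {h w : ℕ} (S : Fin h → Fin w → ℕ) : ℕ :=
  Nat.card {i : Fin h // ∃ h1 : (i : ℕ) + 1 < h, S i ≠ S ⟨(i : ℕ) + 1, h1⟩}

section Aux

variable {h w : ℕ}


/-- Extension of `S` to all of `ℕ`. -/
def Sx (S : Fin h → Fin w → ℕ) (t : ℕ) : Fin w → ℕ :=
  if ht : t < h then S ⟨t, ht⟩ else fun _ => 0

lemma Sx_eq (S : Fin h → Fin w → ℕ) {t : ℕ} (ht : t < h) : Sx S t = S ⟨t, ht⟩ :=
  dif_pos ht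

/-- `bsP S x s` : all haplotypes with indices in `[s, x]` are equal (chained). -/
def bsP (S : Fin h → Fin w → ℕ) (x s : ℕ) : Prop :=
  s ≤ x ∧ ∀ t, s ≤ t → t < x → Sx S t = Sx S (t+1)

lemma bsP_self (S : Fin h → Fin w → ℕ) (x : ℕ) : bsP S x x :=
  ⟨le_refl x, fun t ht ht' => absurd ht' (not_lt.2 ht)⟩

open Classical in
/-- start of the block of `x`. -/
noncomputable def bs (S : Fin h → Fin w → ℕ) (x : ℕ) : ℕ :=
  Nat.find ⟨x, bsP_self S x⟩

open Classical in
lemma bs_spec (S : Fin h → Fin w → ℕ) (x : ℕ) : bsP S x (bs S x) :=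
  Nat.find_spec ⟨x, bsP_self S x⟩

lemma bs_le (S : Fin h → Fin w → ℕ) (x : ℕ) : bs S x ≤ x := (bs_spec S x).1

open Classical in
lemma bs_min (S : Fin h → Fin w → ℕ) {x s : ℕ} (hs : s < bs S x) : ¬ bsP S x s := by
  unfold bs at hs
  exact Nat.find_min _ hs

lemma bs_pos_ne (S : Fin h → Fin w → ℕ) (x : ℕ) (hpos : 0 < bs S x) :
    Sx S (bs S x - 1) ≠ Sx S (bs S x) := by
  have hmin : ¬ bsP S x (bs S x - 1) := bs_min S (by omega)
  intro hEq
  apply hmin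
  refine ⟨by have := bs_le S x; omega, fun t ht ht' => ?_⟩
  by_cases hbt : bs S x ≤ t
  · exact (bs_spec S x).2 t hbt ht'
  · have h1 : t = bs S x - 1 := by omega
    subst h1
    have h2 : bs S x - 1 + 1 = bs S x := by omega
    rw [h2]
    exact hEq

lemma chain_shift {β : Type*} (g : ℕ → β) :
    ∀ (d t : ℕ), (∀ u, t ≤ u → u < t + d → g u = g (u+1)) → g t = g (t + d) := by
  intro d
  induction d with
  | zero => intro t _; rfl
  | succ d ih =>
    intro t hc
    have h1 : g t = g (t+1) := hc t le_rfl (by omega)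
    have h2 : g (t+1) = g (t+1+d) := ih (t+1) (fun u hu hu' => hc u (by omega) (by omega))
    rw [h1, h2]; congr 1; omega

lemma chain_const {β : Type*} (g : ℕ → β) (s x : ℕ)
    (hc : ∀ t, s ≤ t → t < x → g t = g (t+1)) :
    ∀ t, s ≤ t → t ≤ x → g t = g x := by
  intro t hst htx
  have := chain_shift g (x - t) t (fun u hu hu' => hc u (by omega) (by omega))
  rwa [Nat.add_sub_cancel' htx] at this

/-- Strings are constant on the union of two blocks with the same start. -/
lemma block_const (S : Fin h → Fin w → ℕ) (x z : ℕ) (hb : bs S x = bs S z) :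
    ∀ m, bs S x ≤ m → m ≤ max x z → Sx S m = Sx S x := by
  have cx : ∀ t, bs S x ≤ t → t ≤ x → Sx S t = Sx S x :=
    chain_const _ _ _ (bs_spec S x).2
  have cz : ∀ t, bs S z ≤ t → t ≤ z → Sx S t = Sx S z :=
    chain_const _ _ _ (bs_spec S z).2
  have hxz : Sx S x = Sx S z ∨ Sx S z = Sx S x := by
    rcases le_total x z with hle | hle
    · exact Or.inl (cz x (hb ▸ bs_le S x) hle)
    · exact Or.inr (cx z (hb.symm ▸ bs_le S z) hle)
  intro m hm hm'
  rcases le_or_gt m x with hmx | hmx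
  · exact cx m hm hmx
  · have hmz : m ≤ z := by rcases max_cases x z with ⟨he, h2⟩ | ⟨he, h2⟩ <;> omega
    have := cz m (hb ▸ hm) hmz
    rcases hxz with he | he
    · rw [this, ← he]
    · rw [this, he]

lemma revPrefix_congr (S : Fin h → Fin w → ℕ) (j : ℕ) {a b : Fin h} (hab : S a = S b) :
    revPrefix S j a = revPrefix S j b := by
  unfold revPrefix
  rw [hab]

lemma Sx_fin (S : Fin h → Fin w → ℕ) (x : Fin h) : Sx S x.val = S x := Sx_eq S x.isLt

/-- key sandwich lemma: if positions `i ≤ m ≤ k` in the sorted order have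
`PA i` and `PA k` in the same block, then `PA m` has the same haplotype. -/
lemma sandwich {j : ℕ} {PA : Fin h ≃ Fin h} (S : Fin h → Fin w → ℕ)
    (hPA : IsStableSort S j PA) {i m k : Fin h} (him : i ≤ m) (hmk : m ≤ k)
    (hc : bs S (PA i).val = bs S (PA k).val) : S (PA m) = S (PA i) := by
  set x := PA i with hx
  set z := PA k with hz
  set y := PA m with hy
  -- strings at x and z agree
  have hSxz : S x = S z := by
    rw [← Sx_fin S x, ← Sx_fin S z]
    exact (block_const S x.val z.val hc z.val (hc ▸ bs_le S z.val) (le_max_right _ _)).symm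
  rcases eq_or_lt_of_le him with rfl | him'
  · rfl
  rcases eq_or_lt_of_le hmk with rfl | hmk'
  · exact hSxz.symm
  -- now i < m < k
  have hrpxz : revPrefix S j x = revPrefix S j z := revPrefix_congr S j hSxz
  have h1 := hPA i m him'
  have h2 := hPA m k hmk'
  rw [← hx, ← hy] at h1
  rw [← hy, ← hz] at h2
  have hrp : revPrefix S j y = revPrefix S j x := by
    rcases h1 with h1L | ⟨h1E, _⟩
    · rcases h2 with h2L | ⟨h2E, _⟩
      · rw [hrpxz] at h1L
        exact absurd h2L (asymm h1L)
      · rw [h2E, ← hrpxz]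
    · exact h1E.symm
  -- indices are strictly increasing within equal prefixes
  have hxy : x.val < y.val := by
    rcases h1 with h1L | ⟨_, hlt⟩
    · rw [hrp] at h1L
      exact absurd h1L (irrefl _)
    · exact hlt
  have hyz : y.val < z.val := by
    rcases h2 with h2L | ⟨_, hlt⟩
    · rw [hrp, hrpxz] at h2L
      exact absurd h2L (irrefl _)
    · exact hlt
  have hb : bs S x.val ≤ y.val := le_trans (bs_le S x.val) (le_of_lt hxy)
  have hm' : y.val ≤ max x.val z.val := le_trans (le_of_lt hyz) (le_max_right _ _)
  have := block_const S x.val z.val hc y.val hb hm'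
  rw [Sx_fin, Sx_fin] at this
  exact this

section Lists
open Finset
variable {α β : Type*} [DecidableEq α] [DecidableEq β]


/-- Number of adjacent unequal pairs in a list. -/
def cnt (l : List α) : ℕ := (l.zip l.tail).countP (fun p => decide (p.1 ≠ p.2))

lemma cnt_cons_cons (a b : α) (l : List α) :
    cnt (a :: b :: l) = cnt (b :: l) + if a ≠ b then 1 else 0 := by
  simp [cnt, List.countP_cons]

lemma destutter'_length_le (l : List α) (a : α) :
    (l.destutter' (· ≠ ·) a).length ≤ cnt (a :: l) + 1 := by
  induction l generalizing a with
  | nil => simp [List.destutter'_nil]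
  | cons b l ih =>
    rw [List.destutter'_cons]
    by_cases hab : a ≠ b
    · rw [if_pos hab, cnt_cons_cons, if_pos hab]
      simpa using Nat.add_le_add_right (ih b) 1
    · push_neg at hab
      subst hab
      rw [if_neg (by simp), cnt_cons_cons, if_neg (by simp)]
      exact ih a

lemma runCount_le_cnt {n : ℕ} (f : Fin n → α) :
    ((List.ofFn f).destutter (· ≠ ·)).length ≤ cnt (List.ofFn f) + 1 := by
  cases n with
  | zero => simp [List.destutter]
  | succ m =>
    rw [List.ofFn_succ, List.destutter_cons']
    exact destutter'_length_le _ _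

lemma countP_ofFn {n : ℕ} (g : Fin n → α) (p : α → Bool) :
    (List.ofFn g).countP p = ∑ i, if p (g i) then 1 else 0 := by
  induction n with
  | zero => simp
  | succ m ih =>
    rw [List.ofFn_succ, List.countP_cons, ih, Fin.sum_univ_succ, add_comm]

lemma zip_ofFn' : ∀ (m : ℕ) (f : Fin (m+1) → α) (g : Fin m → β),
    (List.ofFn f).zip (List.ofFn g) = List.ofFn (fun i : Fin m => (f i.castSucc, g i)) := by
  intro m
  induction m with
  | zero => intro f g; simp
  | succ m ih =>
    intro f g
    rw [List.ofFn_succ (f := f), List.ofFn_succ (f := g), List.zip_cons_cons, ih,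
      List.ofFn_succ]
    simp

lemma cnt_ofFn {m : ℕ} (f : Fin (m+1) → α) :
    cnt (List.ofFn f)
      = ((univ : Finset (Fin m)).filter (fun i => f i.castSucc ≠ f i.succ)).card := by
  have ht : (List.ofFn f).tail = List.ofFn (fun i : Fin m => f i.succ) := by
    rw [List.ofFn_succ]; rfl
  rw [cnt, ht, zip_ofFn', countP_ofFn, Finset.card_filter]
  simp

end Lists

open Classical in
noncomputable def adjFinset (S : Fin h → Fin w → ℕ) : Finset (Fin h) :=
  Finset.univ.filter (fun i => ∃ h1 : (i:ℕ)+1 < h, S i ≠ S ⟨(i:ℕ)+1, h1⟩)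

lemma col_bound (S : Fin h → Fin w → ℕ) (j : Fin w) (PA : Fin h ≃ Fin h)
    (hPA : IsStableSort S (j : ℕ) PA) :
    runCount (fun i : Fin h => S (PA i) j) ≤ (adjFinset S).card + 1 := by
  classical
  by_cases hh : h = 0
  · subst hh
    simp [runCount, List.destutter]
  obtain ⟨m, rfl⟩ := Nat.exists_eq_succ_of_ne_zero hh
  set f : Fin (m+1) → ℕ := fun i => S (PA i) j with hf
  have step1 : runCount f ≤ cnt (List.ofFn f) + 1 := runCount_le_cnt f
  set B := (Finset.univ : Finset (Fin m)).filter (fun i => f i.castSucc ≠ f i.succ) with hB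
  have step2 : cnt (List.ofFn f) = B.card := cnt_ofFn f
  set R : Finset (Fin (m+1)) := insert 0 (B.image Fin.succ) with hR
  have hcardR : R.card = B.card + 1 := by
    rw [hR, Finset.card_insert_of_notMem, Finset.card_image_of_injective _ (Fin.succ_injective m)]
    simp only [Finset.mem_image, not_exists, not_and]
    intro i _
    exact Fin.succ_ne_zero i
  set c : Fin (m+1) → ℕ := fun i => bs S (PA i).val with hc
  have key : ∀ a b : Fin (m+1), b ∈ R → a < b → c a ≠ c b := by
    intro a b hbR hlt hceq
    have hbmem : b ∈ B.image Fin.succ := by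
      rcases Finset.mem_insert.mp hbR with h0 | hmem
      · subst h0; exact absurd hlt (Fin.not_lt_zero a)
      · exact hmem
    obtain ⟨i'', hi''B, rfl⟩ := Finset.mem_image.mp hbmem
    have hi'' := (Finset.mem_filter.mp hi''B).2
    apply hi''
    have hle1 : a ≤ i''.castSucc := by
      rw [Fin.le_def]
      rw [Fin.lt_def] at hlt
      simp only [Fin.val_succ] at hlt
      simp only [Fin.coe_castSucc]
      omega
    have hle2 : i''.castSucc ≤ i''.succ := (Fin.castSucc_lt_succ : i''.castSucc < i''.succ).le
    have e1 : S (PA i''.castSucc) = S (PA a) := sandwich S hPA hle1 hle2 hceq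
    have e2 : S (PA i''.succ) = S (PA a) := sandwich S hPA (le_of_lt hlt) le_rfl hceq
    show f i''.castSucc = f i''.succ
    simp only [hf]
    rw [e1, e2]
  have hinj : Set.InjOn c R := by
    intro a ha b hb hab
    by_contra hne
    rcases lt_trichotomy a b with hlt | heq | hgt
    · exact key a b hb hlt hab
    · exact hne heq
    · exact key b a ha hgt hab.symm
  have hcard2 : (R.image c).card = R.card := Finset.card_image_of_injOn hinj
  have hsub1 : R.image c ⊆ Finset.univ.image (fun x : Fin (m+1) => bs S x.val) := by
    intro v hv
    obtain ⟨a, _, rfl⟩ := Finset.mem_image.mp hv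
    exact Finset.mem_image.mpr ⟨PA a, Finset.mem_univ _, rfl⟩
  have hsub2 : Finset.univ.image (fun x : Fin (m+1) => bs S x.val)
      ⊆ insert 0 ((adjFinset S).image (fun i : Fin (m+1) => (i : ℕ) + 1)) := by
    intro v hv
    obtain ⟨x, _, rfl⟩ := Finset.mem_image.mp hv
    by_cases h0 : bs S x.val = 0
    · rw [h0]; exact Finset.mem_insert_self _ _
    · apply Finset.mem_insert_of_mem
      have hpos : 0 < bs S x.val := Nat.pos_of_ne_zero h0
      have hne := bs_pos_ne S x.val hpos
      have hvlt : bs S x.val < m + 1 := lt_of_le_of_lt (bs_le S x.val) x.isLt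
      refine Finset.mem_image.mpr ⟨⟨bs S x.val - 1, by omega⟩, ?_, by simp; omega⟩
      refine Finset.mem_filter.mpr ⟨Finset.mem_univ _, ?_⟩
      refine ⟨by simp; omega, ?_⟩
      intro hEq
      apply hne
      rw [Sx_eq S (show bs S x.val - 1 < m + 1 by omega), Sx_eq S hvlt]
      have hfin : (⟨bs S x.val - 1 + 1, by omega⟩ : Fin (m+1)) = ⟨bs S x.val, hvlt⟩ :=
        Fin.ext (by simp; omega)
      rw [← hfin]
      exact hEq
  calc runCount f ≤ B.card + 1 := by rw [← step2]; exact step1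
    _ = R.card := hcardR.symm
    _ = (R.image c).card := hcard2.symm
    _ ≤ (Finset.univ.image (fun x : Fin (m+1) => bs S x.val)).card := Finset.card_le_card hsub1
    _ ≤ (insert 0 ((adjFinset S).image (fun i : Fin (m+1) => (i : ℕ) + 1))).card :=
        Finset.card_le_card hsub2
    _ ≤ ((adjFinset S).image (fun i : Fin (m+1) => (i : ℕ) + 1)).card + 1 :=
        Finset.card_insert_le _ _
    _ ≤ (adjFinset S).card + 1 := Nat.add_le_add_right (Finset.card_image_le) 1

lemma adjDiff_eq (S : Fin h → Fin w → ℕ) : adjDiff S = (adjFinset S).card := by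
  classical
  rw [adjDiff, Nat.card_eq_fintype_card, Fintype.card_subtype, adjFinset]


end Aux

theorem stmt4 (h w : ℕ) (S : Fin h → Fin w → ℕ) (PA : Fin w → Fin h ≃ Fin h)
    (hPA : ∀ j : Fin w, IsStableSort S (j : ℕ) (PA j)) :
    ∑ j : Fin w, runCount (fun i : Fin h => S (PA j i) j) ≤ w * (adjDiff S + 1) := by
  classical
  calc ∑ j : Fin w, runCount (fun i : Fin h => S (PA j i) j)
      ≤ ∑ _j : Fin w, ((adjFinset S).card + 1) :=
        Finset.sum_le_sum (fun j _ => col_bound S j (PA j) (hPA j))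
    _ = w * ((adjFinset S).card + 1) := by
        rw [Finset.sum_const, Finset.card_univ, Fintype.card_fin, smul_eq_mul]
    _ = w * (adjDiff S + 1) := by rw [adjDiff_eq]


end PBWT
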